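/- Let H = ⊕_{k} H^k be a finite-dimensional graded ℚ-vector space, let K, N be natural numbers, and let ⟨−,−⟩ : H × H → ℚ be a perfect bilinear pairing with ⟨H^k, H^{k'}⟩ = 0 whenever k + k' ≠ K. Let (C_ℓ H)_{ℓ ∈ ℕ} be an increasing filtration of H by subspaces, compatible with the grading (i.e. C_ℓ H = ⊕_k (C_ℓ H ∩ H^k)), such that ⟨v, w⟩ = 0 whenever v ∈ C_i H, w ∈ C_j H and i + j < N. Suppose there exists a basis B of H consisting of homogeneous elements, an involution v ↦ v̌ of B, and functions ℓ, k : B → ℕ such that: (i) ⟨v, u⟩ = 0 for every u ∈ B with u ≠ v̌, and ⟨v, v̌⟩ ≠ 0; (ii) v ∈ C_{ℓ(v)} H ∩ H^{k(v)} for every v ∈ B; and (iii) ℓ(v) + ℓ(v̌) = N for every v ∈ B. Then for all ℓ₀, k₀: dim ((C_{ℓ₀} H ∩ H^{k₀}) / (C_{ℓ₀-1} H ∩ H^{k₀})) = #{v ∈ B : k(v) = k₀ and ℓ(v) = ℓ₀}. -/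

import Mathlib

/-!
Statement 1 (the abstract content of Lemma 2.2 of the paper, the 'anti-diagonal basis lemma').

The grading of `H` is encoded by submodules `Hgr k` forming an internal direct sum; the
filtration is indexed by `ℤ` (with `C ℓ = 0` for `ℓ < 0`, realizing the convention
`C_{-1} H = 0`).  The basis is `b : Basis ι ℚ H`, the involution is `inv`, and the graded piece
`(C ℓ₀ ∩ H^{k₀}) / (C (ℓ₀−1) ∩ H^{k₀})` is realized as a quotient of submodules.
-/

theorem stmt1 (H : Type*) [AddCommGroup H] [Module ℚ H] [FiniteDimensional ℚ H]
    (Hgr : ℕ → Submodule ℚ H) (hinternal : DirectSum.IsInternal Hgr)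
    (K N : ℕ)
    (B : H →ₗ[ℚ] H →ₗ[ℚ] ℚ)
    (hperf : Function.Bijective fun v : H => B v)
    (hdeg : ∀ k k' : ℕ, k + k' ≠ K → ∀ v ∈ Hgr k, ∀ w ∈ Hgr k', B v w = 0)
    (C : ℤ → Submodule ℚ H) (hmono : Monotone C)
    (hneg : ∀ ℓ : ℤ, ℓ < 0 → C ℓ = ⊥)
    (hcompat : ∀ ℓ : ℤ, C ℓ = ⨆ k : ℕ, (C ℓ ⊓ Hgr k))
    (hvanish : ∀ i j : ℤ, i + j < (N : ℤ) → ∀ v ∈ C i, ∀ w ∈ C j, B v w = 0)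
    (ι : Type*) (b : Module.Basis ι ℚ H)
    (inv : ι → ι) (hinv : ∀ v : ι, inv (inv v) = v)
    (lf kf : ι → ℕ)
    (hanti₁ : ∀ v u : ι, u ≠ inv v → B (b v) (b u) = 0)
    (hanti₂ : ∀ v : ι, B (b v) (b (inv v)) ≠ 0)
    (hmem : ∀ v : ι, b v ∈ C (lf v) ⊓ Hgr (kf v))
    (hlsum : ∀ v : ι, lf v + lf (inv v) = N) :
    ∀ (ℓ₀ : ℤ) (k₀ : ℕ),
      Module.finrank ℚ
          (↥(C ℓ₀ ⊓ Hgr k₀) ⧸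
            Submodule.comap (C ℓ₀ ⊓ Hgr k₀).subtype (C (ℓ₀ - 1) ⊓ Hgr k₀))
        = Nat.card {v : ι // kf v = k₀ ∧ (lf v : ℤ) = ℓ₀} := by
  classical
  intro ℓ₀ k₀
  haveI : Fintype ι := FiniteDimensional.fintypeBasisIndex b
  -- the degrees pair up to K
  have hK : ∀ v : ι, kf v + kf (inv v) = K := by
    intro v
    by_contra h
    exact hanti₂ v (hdeg _ _ h _ (hmem v).2 _ (hmem (inv v)).2)
  -- coefficient vanishing
  have hcoef : ∀ (ℓ : ℤ) (x : H), x ∈ C ℓ ⊓ Hgr k₀ → ∀ v : ι,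
      ¬ (kf v = k₀ ∧ (lf v : ℤ) ≤ ℓ) → b.repr x v = 0 := by
    intro ℓ x hx v hv
    set u := inv v with hu
    have key : B x (b u) = b.repr x v * B (b v) (b u) := by
      have hxr : (∑ i, b.repr x i • b i) = x := b.sum_repr x
      rw [← hxr, map_sum, LinearMap.sum_apply]
      rw [Finset.sum_eq_single v]
      · simp
      · intro i _ hi
        have hne : u ≠ inv i := by
          intro h
          apply hi
          have := congrArg inv h
          rw [hu, hinv, hinv] at this
          exact this.symm
        simp [hanti₁ i u hne]
      · intro h; exact absurd (Finset.mem_univ v) h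
    by_cases hk : kf v = k₀
    · -- then lf v > ℓ, use filtration vanishing
      have hlv : ℓ < (lf v : ℤ) := by
        by_contra h
        exact hv ⟨hk, by omega⟩
      have hlt : ℓ + (lf u : ℤ) < (N : ℤ) := by
        have := hlsum v
        have h2 : lf u = lf (inv v) := rfl
        omega
      have h0 : B x (b u) = 0 := hvanish ℓ (lf u) hlt x hx.1 (b u) (hmem u).1
      rcases mul_eq_zero.1 (key.symm.trans h0) with h | h
      · exact h
      · exact absurd h (hanti₂ v)
    · -- degree mismatch
      have hne : k₀ + kf u ≠ K := by
        have := hK v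
        have h3 : kf u = kf (inv v) := rfl
        omega
      have h0 : B x (b u) = 0 := hdeg k₀ (kf u) hne x hx.2 (b u) (hmem u).2
      rcases mul_eq_zero.1 (key.symm.trans h0) with h | h
      · exact h
      · exact absurd h (hanti₂ v)
  -- the finsets
  set T : ℤ → Finset ι := fun ℓ => Finset.univ.filter fun v => kf v = k₀ ∧ (lf v : ℤ) ≤ ℓ
    with hT
  -- each filtration piece is spanned by the corresponding basis vectors
  have hspan : ∀ ℓ : ℤ, C ℓ ⊓ Hgr k₀ = Submodule.span ℚ (b '' ↑(T ℓ)) := by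
    intro ℓ
    apply le_antisymm
    · intro x hx
      have hxr : (∑ i ∈ T ℓ, b.repr x i • b i) = x := by
        rw [Finset.sum_subset (Finset.subset_univ (T ℓ))]
        · exact b.sum_repr x
        · intro i _ hi
          have : ¬ (kf i = k₀ ∧ (lf i : ℤ) ≤ ℓ) := by
            intro h
            exact hi (by simp [hT, h.1, h.2])
          rw [hcoef ℓ x hx i this, zero_smul]
      rw [← hxr]
      refine Submodule.sum_mem _ fun i hi => Submodule.smul_mem _ _ ?_
      exact Submodule.subset_span ⟨i, by simpa using hi, rfl⟩
    · rw [Submodule.span_le]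
      rintro _ ⟨v, hv, rfl⟩
      rw [hT] at hv
      simp only [Finset.coe_filter, Finset.mem_coe, Finset.mem_filter, Finset.mem_univ,
        true_and, Set.mem_setOf_eq] at hv
      exact ⟨hmono hv.2 (hmem v).1, hv.1 ▸ (hmem v).2⟩
  -- hence the rank is the cardinality
  have hd : ∀ ℓ : ℤ, Module.finrank ℚ (C ℓ ⊓ Hgr k₀ : Submodule ℚ H) = (T ℓ).card := by
    intro ℓ
    rw [hspan ℓ]
    have li : LinearIndependent ℚ (fun v : ((T ℓ : Finset ι) : Set ι) => b v) :=
      b.linearIndependent.comp _ Subtype.val_injective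
    have himg : b '' ↑(T ℓ) = Set.range (fun v : ((T ℓ : Finset ι) : Set ι) => b v) :=
      Set.image_eq_range _ _
    rw [himg, finrank_span_eq_card li]
    simp
  -- the quotient rank
  have hle : C (ℓ₀ - 1) ⊓ Hgr k₀ ≤ C ℓ₀ ⊓ Hgr k₀ :=
    inf_le_inf_right _ (hmono (by omega))
  have hq := Submodule.finrank_quotient_add_finrank
    (Submodule.comap (C ℓ₀ ⊓ Hgr k₀).subtype (C (ℓ₀ - 1) ⊓ Hgr k₀))
  have hcomap : Module.finrank ℚ
      (Submodule.comap (C ℓ₀ ⊓ Hgr k₀).subtype (C (ℓ₀ - 1) ⊓ Hgr k₀)) =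
      Module.finrank ℚ (C (ℓ₀ - 1) ⊓ Hgr k₀ : Submodule ℚ H) :=
    (Submodule.comapSubtypeEquivOfLe hle).finrank_eq
  have hrk : Module.finrank ℚ (C ℓ₀ ⊓ Hgr k₀ : Submodule ℚ H)
      = Module.finrank ℚ ((C ℓ₀ ⊓ Hgr k₀ : Submodule ℚ H) : Type _) := rfl
  -- cardinality splitting
  have hcardsplit : (T ℓ₀).card = (T (ℓ₀ - 1)).card +
      (Finset.univ.filter fun v => kf v = k₀ ∧ (lf v : ℤ) = ℓ₀).card := by
    rw [← Finset.card_union_of_disjoint]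
    · congr 1
      ext v
      simp only [hT, Finset.mem_union, Finset.mem_filter, Finset.mem_univ, true_and]
      constructor
      · rintro ⟨h1, h2⟩
        by_cases h : (lf v : ℤ) = ℓ₀
        · exact Or.inr ⟨h1, h⟩
        · exact Or.inl ⟨h1, by omega⟩
      · rintro (⟨h1, h2⟩ | ⟨h1, h2⟩) <;> exact ⟨h1, by omega⟩
    · rw [Finset.disjoint_left]
      intro v hv1 hv2
      simp only [hT, Finset.mem_filter, Finset.mem_univ, true_and] at hv1 hv2
      omega
  have hnc : Nat.card {v : ι // kf v = k₀ ∧ (lf v : ℤ) = ℓ₀}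
      = (Finset.univ.filter fun v => kf v = k₀ ∧ (lf v : ℤ) = ℓ₀).card := by
    rw [Nat.card_eq_fintype_card, Fintype.card_subtype]
  rw [hnc]
  have h1 := hd ℓ₀
  have h2 := hd (ℓ₀ - 1)
  rw [hcomap, h2, h1] at hq
  omega
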